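/- Let A be a finitely generated commutative pointed monoid and X an A-set. Then X satisfies the ascending chain condition on A-set congruences (every increasing sequence of congruences on X is eventually constant) if and only if X is noetherian, i.e. X satisfies the ascending chain condition on A-subsets. -/

import Mathlib

/-- A congruence on an `A`-set `X`: an equivalence relation compatible with the
`A`-action. -/
def IsASetCong (A : Type*) {X : Type*} [CommMonoidWithZero A] [Zero X]
    [MulActionWithZero A X] (r : X → X → Prop) : Prop :=
  Equivalence r ∧ ∀ (a : A) (x y : X), r x y → r (a • x) (a • y)

/-- An `A`-subset of an `A`-set `X`: a subset containing `0` and closed under the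
`A`-action. -/
def IsASubset (A : Type*) {X : Type*} [CommMonoidWithZero A] [Zero X]
    [MulActionWithZero A X] (S : Set X) : Prop :=
  (0 : X) ∈ S ∧ ∀ a : A, ∀ x ∈ S, a • x ∈ S

section AuxModule

variable {A : Type*} [Monoid A]

/-- The endomorphisms of `Y →₀ ℚ` coming from an `A`-action on `Y`. -/
noncomputable def actEnd (A : Type*) [Monoid A] (Y : Type*) [MulAction A Y] :
    A →* Module.End ℚ (Y →₀ ℚ) where
  toFun a := Finsupp.lmapDomain ℚ ℚ (a • ·)
  map_one' := by
    refine LinearMap.ext fun m => ?_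
    show Finsupp.mapDomain (fun y => (1 : A) • y) m = m
    simp only [one_smul]
    exact Finsupp.mapDomain_id
  map_mul' a b := by
    refine LinearMap.ext fun m => ?_
    show Finsupp.mapDomain (fun y => (a * b) • y) m
        = Finsupp.mapDomain (a • ·) (Finsupp.mapDomain (b • ·) m)
    rw [← Finsupp.mapDomain_comp]
    simp only [Function.comp_def, mul_smul]

/-- The algebra map from the monoid algebra to endomorphisms of `Y →₀ ℚ`. -/
noncomputable def asetAlgHom (A : Type*) [Monoid A] (Y : Type*) [MulAction A Y] :
    MonoidAlgebra ℚ A →ₐ[ℚ] Module.End ℚ (Y →₀ ℚ) :=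
  MonoidAlgebra.lift ℚ (Module.End ℚ (Y →₀ ℚ)) A (actEnd A Y)

/-- `Y →₀ ℚ` is a module over the monoid algebra. -/
noncomputable instance asetModule (A : Type*) [Monoid A] (Y : Type*) [MulAction A Y] :
    Module (MonoidAlgebra ℚ A) (Y →₀ ℚ) :=
  Module.compHom _ (asetAlgHom A Y).toRingHom

theorem asetModule_smul_def {Y : Type*} [MulAction A Y] (r : MonoidAlgebra ℚ A) (m : Y →₀ ℚ) :
    r • m = asetAlgHom A Y r m := rfl

theorem asetModule_single_smul {Y : Type*} [MulAction A Y] (a : A) (q : ℚ) (m : Y →₀ ℚ) :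
    (MonoidAlgebra.single a q) • m = q • Finsupp.mapDomain (a • ·) m := by
  rw [asetModule_smul_def, asetAlgHom, MonoidAlgebra.lift_single]
  rfl

theorem asetModule_single_smul_single {Y : Type*} [MulAction A Y] (a : A) (q : ℚ) (y : Y)
    (c : ℚ) :
    (MonoidAlgebra.single a q) • (Finsupp.single y c : Y →₀ ℚ)
      = Finsupp.single (a • y) (q * c) := by
  rw [asetModule_single_smul, Finsupp.mapDomain_single, Finsupp.smul_single, smul_eq_mul]

theorem mapDomain_sub' {α β : Type*} (g : α → β) (u v : α →₀ ℚ) :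
    Finsupp.mapDomain g (u - v) = Finsupp.mapDomain g u - Finsupp.mapDomain g v :=
  map_sub (Finsupp.lmapDomain ℚ ℚ g) u v

theorem mapDomain_equivariant {Y Z : Type*} [MulAction A Y] [MulAction A Z]
    (g : Y → Z) (hg : ∀ (a : A) (y : Y), g (a • y) = a • g y) (r : MonoidAlgebra ℚ A)
    (m : Y →₀ ℚ) :
    Finsupp.mapDomain g (r • m) = r • Finsupp.mapDomain g m := by
  induction r using MonoidAlgebra.induction_linear with
  | zero => rw [zero_smul, zero_smul, Finsupp.mapDomain_zero]
  | add f₁ f₂ h₁ h₂ => rw [add_smul, add_smul, Finsupp.mapDomain_add, h₁, h₂]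
  | single a q =>
      rw [asetModule_single_smul, asetModule_single_smul, Finsupp.mapDomain_smul,
        ← Finsupp.mapDomain_comp, ← Finsupp.mapDomain_comp,
        show g ∘ (a • ·) = (a • ·) ∘ g from funext fun y => hg a y]

/-- The setoid attached to a congruence. -/
def congSetoid {X : Type*} (r : X → X → Prop) (hr : Equivalence r) : Setoid X := ⟨r, hr⟩

/-- The quotient of an `A`-set by a congruence is again an `A`-set. -/
def congMulAction {X : Type*} [MulAction A X] (r : X → X → Prop)
    (hr : Equivalence r) (hc : ∀ (a : A) (x y : X), r x y → r (a • x) (a • y)) :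
    MulAction A (Quotient (congSetoid r hr)) where
  smul a := Quotient.map (a • ·) (hc a)
  one_smul q := Quotient.inductionOn q fun x => by
    change Quotient.map ((1 : A) • ·) _ (Quotient.mk _ x) = Quotient.mk _ x
    exact congrArg (Quotient.mk _) (one_smul A x)
  mul_smul a b q := Quotient.inductionOn q fun x => by
    change Quotient.map ((a * b) • ·) _ (Quotient.mk _ x)
        = Quotient.map (a • ·) _ (Quotient.map (b • ·) _ (Quotient.mk _ x))
    exact congrArg (Quotient.mk _) (mul_smul a b x)

end AuxModule

/-- For a finitely generated commutative pointed monoid `A` and an `A`-set `X`,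
`X` has the ascending chain condition on `A`-set congruences if and only if `X` is
noetherian, i.e. has the ascending chain condition on `A`-subsets. -/
theorem acc_congruences_iff_noetherian
    {A : Type*} [CommMonoidWithZero A]
    (hfg : ∃ X₀ : Finset A, ∀ a : A, a ≠ 0 → a ∈ Submonoid.closure (X₀ : Set A))
    {X : Type*} [Zero X] [MulActionWithZero A X] :
    (∀ c : ℕ → (X → X → Prop), (∀ n, IsASetCong A (c n)) →
        (∀ n, ∀ x y : X, c n x y → c (n + 1) x y) →
        ∃ N, ∀ m, N ≤ m → c m = c N) ↔
    (∀ c : ℕ → Set X, (∀ n, IsASubset A (c n)) → (∀ n, c n ⊆ c (n + 1)) →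
        ∃ N, ∀ m, N ≤ m → c m = c N) := by
  constructor
  · -- ACC on congruences implies ACC on A-subsets, via Rees congruences.
    intro h c hsub hstep
    have hmono : ∀ n m, n ≤ m → c n ⊆ c m := by
      intro n m hnm
      induction m, hnm using Nat.le_induction with
      | base => exact subset_rfl
      | succ k hk ih => exact ih.trans (hstep k)
    obtain ⟨N, hN⟩ := h (fun n x y => x = y ∨ (x ∈ c n ∧ y ∈ c n))
      (fun n => ⟨⟨fun x => Or.inl rfl,
        fun hxy => hxy.imp Eq.symm And.symm,
        fun hxy hyz => by
          rcases hxy with rfl | hxy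
          · exact hyz
          · rcases hyz with rfl | hyz
            · exact Or.inr hxy
            · exact Or.inr ⟨hxy.1, hyz.2⟩⟩,
        fun a x y hxy => by
          rcases hxy with rfl | hxy
          · exact Or.inl rfl
          · exact Or.inr ⟨(hsub n).2 a x hxy.1, (hsub n).2 a y hxy.2⟩⟩)
      (fun n x y hxy => hxy.imp id fun hxy => ⟨hstep n hxy.1, hstep n hxy.2⟩)
    refine ⟨N, fun m hm => Set.Subset.antisymm ?_ (hmono N m hm)⟩
    intro x hx
    have hx0 : x = (0 : X) ∨ (x ∈ c m ∧ (0 : X) ∈ c m) := Or.inr ⟨hx, (hsub m).1⟩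
    have hx1 : x = (0 : X) ∨ (x ∈ c N ∧ (0 : X) ∈ c N) :=
      (congrFun (congrFun (hN m hm) x) (0 : X)).mp hx0
    rcases hx1 with rfl | hx0
    · exact (hsub N).1
    · exact hx0.1
  · -- ACC on A-subsets implies ACC on congruences.
    intro h c hcong hstep
    classical
    -- `A` is a finitely generated monoid.
    obtain ⟨X₀, hX₀⟩ := hfg
    haveI : Monoid.FG A := by
      refine ⟨⟨insert (0 : A) X₀, ?_⟩⟩
      rw [eq_top_iff]
      intro a _
      by_cases ha : a = 0
      · exact Submonoid.subset_closure (by simp [ha])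
      · exact Submonoid.closure_mono
          (Finset.coe_subset.mpr (Finset.subset_insert _ _)) (hX₀ a ha)
    haveI : IsNoetherianRing (MonoidAlgebra ℚ A) :=
      Algebra.FiniteType.isNoetherianRing ℚ (MonoidAlgebra ℚ A)
    -- `X` is a finitely generated `A`-set.
    have hXfg : ∃ F : Finset X, ∀ x : X, x = 0 ∨ ∃ a : A, ∃ f ∈ F, x = a • f := by
      set asp : Finset X → Set X := fun F => {x | x = 0 ∨ ∃ a : A, ∃ f ∈ F, x = a • f} with hasp
      have haspsub : ∀ F, IsASubset A (asp F) := by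
        intro F
        constructor
        · exact Or.inl rfl
        · rintro a x (rfl | ⟨b, f, hf, rfl⟩)
          · exact Or.inl (smul_zero a)
          · exact Or.inr ⟨a * b, f, hf, (mul_smul a b f).symm⟩
      have hwf : WellFounded ((· > ·) : {S : Set X // ∃ F, S = asp F} →
          {S : Set X // ∃ F, S = asp F} → Prop) := by
        refine (wellFoundedGT_iff_monotone_chain_condition.mpr ?_).wf
        intro f
        obtain ⟨N, hN⟩ := h (fun n => (f n).1)
          (fun n => by
            obtain ⟨F, hF⟩ := (f n).2
            show IsASubset A (f n).1
            rw [hF]; exact haspsub F)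
          (fun n => f.monotone (Nat.le_succ n))
        exact ⟨N, fun m hm => Subtype.ext (hN m hm).symm⟩
      obtain ⟨mS, -, hmax⟩ := hwf.has_min Set.univ ⟨⟨asp ∅, ∅, rfl⟩, trivial⟩
      obtain ⟨F, hF⟩ := mS.2
      refine ⟨F, fun x => ?_⟩
      have hx : x ∈ asp (insert x F) :=
        Or.inr ⟨1, x, Finset.mem_insert_self x F, (one_smul A x).symm⟩
      have hle : mS ≤ ⟨asp (insert x F), insert x F, rfl⟩ := by
        show mS.1 ⊆ asp (insert x F)
        rw [hF]
        rintro y (rfl | ⟨a, f, hf, rfl⟩)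
        · exact Or.inl rfl
        · exact Or.inr ⟨a, f, Finset.mem_insert_of_mem hf, rfl⟩
      have heq : mS = ⟨asp (insert x F), insert x F, rfl⟩ := by
        by_contra hne
        exact hmax _ trivial (lt_of_le_of_ne hle hne)
      have hxm : x ∈ mS.1 := by rw [heq]; exact hx
      rw [hF] at hxm
      exact hxm
    obtain ⟨F, hF⟩ := hXfg
    -- Hence `X →₀ ℚ` is a finitely generated module over the monoid algebra.
    haveI : Module.Finite (MonoidAlgebra ℚ A) (X →₀ ℚ) := by
      refine ⟨⟨(insert (0 : X) F).image (fun y => Finsupp.single y (1 : ℚ)), ?_⟩⟩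
      rw [Submodule.eq_top_iff']
      intro m
      induction m using Finsupp.induction with
      | zero => exact Submodule.zero_mem _
      | single_add x q f hxf hq ih =>
          refine Submodule.add_mem _ ?_ ih
          have hsing : ∀ y ∈ insert (0 : X) F, (Finsupp.single y (1 : ℚ) : X →₀ ℚ) ∈
              Submodule.span (MonoidAlgebra ℚ A)
                ((insert (0 : X) F).image (fun y => Finsupp.single y (1 : ℚ)) : Set (X →₀ ℚ)) :=
            fun y hy => Submodule.subset_span (Finset.mem_coe.2 (Finset.mem_image_of_mem _ hy))
          rcases hF x with rfl | ⟨a, f', hf', rfl⟩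
          · have := Submodule.smul_mem _ (MonoidAlgebra.single (1 : A) q)
              (hsing 0 (Finset.mem_insert_self _ _))
            rwa [asetModule_single_smul_single, one_smul, mul_one] at this
          · have := Submodule.smul_mem _ (MonoidAlgebra.single a q)
              (hsing f' (Finset.mem_insert_of_mem hf'))
            rwa [asetModule_single_smul_single, mul_one] at this
    haveI : IsNoetherian (MonoidAlgebra ℚ A) (X →₀ ℚ) :=
      isNoetherian_of_isNoetherianRing_of_finite _ _
    -- The chain of submodules attached to the chain of congruences.
    set D : ℕ → Set (X →₀ ℚ) := fun n =>
      {d | ∃ x y, c n x y ∧ d = Finsupp.single x 1 - Finsupp.single y 1} with hD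
    have hDmono : ∀ n, D n ⊆ D (n + 1) := by
      rintro n d ⟨x, y, hxy, hd⟩
      exact ⟨x, y, hstep n x y hxy, hd⟩
    obtain ⟨K, hK⟩ := monotone_stabilizes_iff_noetherian.mpr inferInstance
      ⟨fun n => Submodule.span (MonoidAlgebra ℚ A) (D n),
        monotone_nat_of_le_succ fun n => Submodule.span_mono (hDmono n)⟩
    refine ⟨K, fun m hm => ?_⟩
    have hmono : ∀ x y : X, c K x y → c m x y := by
      intro x y hxy
      induction m, hm using Nat.le_induction with
      | base => exact hxy
      | succ n hn ih => exact hstep n x y ih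
    funext x y
    refine propext ⟨fun hxy => ?_, hmono x y⟩
    -- Reflection: `c m x y` implies `c K x y`.
    have hel : Finsupp.single x 1 - Finsupp.single y 1
        ∈ Submodule.span (MonoidAlgebra ℚ A) (D K) := by
      have := hK m hm
      simp only [OrderHom.coe_mk] at this
      rw [this]
      exact Submodule.subset_span ⟨x, y, hxy, rfl⟩
    letI instQ := congMulAction (A := A) (c K) (hcong K).1 (hcong K).2
    have hzero : ∀ v ∈ Submodule.span (MonoidAlgebra ℚ A) (D K),
        Finsupp.mapDomain (Quotient.mk (congSetoid (c K) (hcong K).1)) v = 0 := by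
      intro v hv
      refine Submodule.span_induction ?_ ?_ ?_ ?_ hv
      · rintro d ⟨x', y', hxy', rfl⟩
        rw [mapDomain_sub', Finsupp.mapDomain_single, Finsupp.mapDomain_single,
          Quotient.sound hxy', sub_self]
      · exact Finsupp.mapDomain_zero
      · intro u v _ _ hu hv
        rw [Finsupp.mapDomain_add, hu, hv, add_zero]
      · intro r v _ hv
        rw [mapDomain_equivariant (Quotient.mk (congSetoid (c K) (hcong K).1))
          (fun a z => rfl) r v, hv, smul_zero]
    have h0 := hzero _ hel
    rw [mapDomain_sub', Finsupp.mapDomain_single, Finsupp.mapDomain_single,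
      sub_eq_zero] at h0
    exact Quotient.exact ((Finsupp.single_left_inj one_ne_zero).1 h0)
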